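/- A finite nilpotent group G satisfies D(G) = 2|G| + 1 (i.e., G is quasi-Leinster) if and only if G is cyclic and σ(|G|) = 2|G| + 1 (i.e., |G| is quasi-perfect). -/

import Mathlib

/-- Sum of the orders of all normal subgroups of `G`. -/
noncomputable def D (G : Type*) [Group G] : ℕ :=
  ∑ᶠ N ∈ {N : Subgroup G | N.Normal}, Nat.card N


open Finset

section Aux

/-- In a finite cyclic group, subgroups with equal cardinality are equal. -/
lemma subgroup_eq_of_card_eq {G : Type*} [Group G] [Finite G] [IsCyclic G]
    {H K : Subgroup G} (h : Nat.card H = Nat.card K) : H = K := by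
  classical
  cases nonempty_fintype G
  have key : ∀ (L : Subgroup G), (L : Set G) = {x : G | x ^ (Nat.card L) = 1} := by
    intro L
    have hL0 : 0 < Nat.card L := Nat.card_pos
    have hsub : (L : Set G) ⊆ {x : G | x ^ (Nat.card L) = 1} := by
      intro x hx
      have h1 : (⟨x, hx⟩ : L) ^ (Nat.card L) = 1 := pow_card_eq_one'
      have h2 := congrArg (Subtype.val) h1
      show x ^ (Nat.card L) = 1
      simpa only [SubmonoidClass.coe_pow, OneMemClass.coe_one] using h2
    refine Set.eq_of_subset_of_ncard_le hsub ?_ (Set.toFinite _)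
    have hfin : {x : G | x ^ (Nat.card L) = 1}.ncard ≤ Nat.card L := by
      have := IsCyclic.card_pow_eq_one_le (α := G) (n := Nat.card L) hL0
      rw [Set.ncard_eq_toFinset_card']
      simpa [Set.toFinset_setOf] using this
    calc {x : G | x ^ (Nat.card L) = 1}.ncard ≤ Nat.card L := hfin
      _ = (L : Set G).ncard := by rw [← Nat.card_coe_set_eq]; simp
  have h2 : (H : Set G) = (K : Set G) := by rw [key H, key K, h]
  exact SetLike.ext' h2

/-- A finite cyclic group has a subgroup of any order dividing the group order. -/
lemma exists_subgroup_card_eq_of_dvd {G : Type*} [Group G] [Finite G] [IsCyclic G]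
    {d : ℕ} (hd : d ∣ Nat.card G) : ∃ H : Subgroup G, Nat.card H = d := by
  obtain ⟨g, hg⟩ := IsCyclic.exists_generator (α := G)
  have hord : orderOf g = Nat.card G := orderOf_eq_card_of_forall_mem_zpowers hg
  have hn0 : Nat.card G ≠ 0 := Nat.card_pos.ne'
  refine ⟨Subgroup.zpowers (g ^ (Nat.card G / d)), ?_⟩
  rw [Nat.card_zpowers, orderOf_pow, hord]
  have hdvd : Nat.card G / d ∣ Nat.card G := Nat.div_dvd_of_dvd hd
  rw [Nat.gcd_eq_right hdvd, Nat.div_div_self hd hn0]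

end Aux

lemma D_eq_sum_finset (G : Type*) [Group G] [Finite G] :
    D G = ∑ N ∈ (Set.toFinite {N : Subgroup G | N.Normal}).toFinset, Nat.card N := by
  rw [D, ← finsum_mem_coe_finset]
  simp

lemma D_eq_sigma_of_cyclic (G : Type*) [Group G] [Finite G] [IsCyclic G] :
    D G = ∑ d ∈ (Nat.card G).divisors, d := by
  classical
  letI : CommGroup G := IsCyclic.commGroup
  rw [D_eq_sum_finset]
  have hall : ∀ N : Subgroup G, N ∈ (Set.toFinite {N : Subgroup G | N.Normal}).toFinset := by
    intro N; simp [Subgroup.normal_of_comm]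
  refine Finset.sum_bij (fun H _ => Nat.card H) ?_ ?_ ?_ ?_
  · intro H _
    exact Nat.mem_divisors.mpr ⟨Subgroup.card_subgroup_dvd_card H, Nat.card_pos.ne'⟩
  · intro H _ K _ h
    exact subgroup_eq_of_card_eq h
  · intro d hd
    obtain ⟨H, hH⟩ := exists_subgroup_card_eq_of_dvd (Nat.mem_divisors.mp hd).1
    exact ⟨H, hall H, hH⟩
  · intro H _; rfl

lemma isCyclic_quotient_of_coatom {G : Type*} [Group G] {K : Subgroup G} [K.Normal]
    (hK : IsCoatom K) : IsCyclic (G ⧸ K) := by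
  obtain ⟨x, hx⟩ : ∃ x : G, x ∉ K := by
    by_contra h
    push_neg at h
    exact hK.1 ((Subgroup.eq_top_iff' K).mpr h)
  set xb : G ⧸ K := QuotientGroup.mk x with hxb
  set S : Subgroup G := Subgroup.comap (QuotientGroup.mk' K) (Subgroup.zpowers xb) with hS
  have hKS : K ≤ S := by
    intro k hk
    simp only [hS, Subgroup.mem_comap]
    have : QuotientGroup.mk' K k = 1 := by
      rw [← QuotientGroup.ker_mk' K] at hk
      exact hk
    rw [this]; exact one_mem _
  have hxS : x ∈ S := by
    simp only [hS, Subgroup.mem_comap]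
    exact Subgroup.mem_zpowers _
  have hKneS : K ≠ S := fun h => hx (h ▸ hxS)
  have hStop : S = ⊤ := hK.2 S (lt_of_le_of_ne hKS hKneS)
  refine ⟨⟨xb, fun y => ?_⟩⟩
  obtain ⟨z, rfl⟩ := QuotientGroup.mk'_surjective K y
  have : z ∈ S := hStop ▸ Subgroup.mem_top z
  have h' : QuotientGroup.mk' K z ∈ Subgroup.zpowers xb := by
    simpa only [hS, Subgroup.mem_comap] using this
  exact h'

lemma commutator_le_frattini {G : Type*} [Group G] [Finite G]
    (hnil : Group.IsNilpotent G) : commutator G ≤ frattini G := by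
  haveI := hnil
  rw [frattini, Order.radical]
  refine le_iInf fun K => le_iInf fun hK => ?_
  haveI : K.Normal := Subgroup.NormalizerCondition.normal_of_coatom K
    (normalizerCondition_of_isNilpotent) hK
  haveI : IsCyclic (G ⧸ K) := isCyclic_quotient_of_coatom hK
  letI : CommGroup (G ⧸ K) := IsCyclic.commGroup
  have := Abelianization.commutator_subset_ker (QuotientGroup.mk' K)
  rwa [QuotientGroup.ker_mk' K] at this

lemma isCyclic_of_abelianization_isCyclic {G : Type*} [Group G] [Finite G]
    (hnil : Group.IsNilpotent G) (h : IsCyclic (Abelianization G)) : IsCyclic G := by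
  obtain ⟨a, ha⟩ := IsCyclic.exists_generator (α := Abelianization G)
  obtain ⟨g, rfl⟩ : ∃ g : G, Abelianization.of g = a :=
    (fun y => Quotient.inductionOn y fun g => ⟨g, rfl⟩ : Function.Surjective (Abelianization.of (G := G))) a
  have hsup : Subgroup.zpowers g ⊔ commutator G = ⊤ := by
    rw [eq_top_iff]
    intro x _
    obtain ⟨k, hk⟩ := ha (Abelianization.of x)
    have hker : x * (g ^ k)⁻¹ ∈ commutator G := by
      rw [← QuotientGroup.eq_one_iff (N := commutator G) (x * (g ^ k)⁻¹)]
      have : Abelianization.of (x * (g ^ k)⁻¹) = 1 := by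
        simp only [map_mul, map_inv, map_zpow]
        rw [show Abelianization.of g ^ k = Abelianization.of x from hk]
        group
      exact this
    have hx : x = (x * (g ^ k)⁻¹) * g ^ k := by group
    rw [hx]
    exact mul_mem (Subgroup.mem_sup_right hker)
      (Subgroup.mem_sup_left (Subgroup.zpow_mem _ (Subgroup.mem_zpowers g) k))
  have hsup2 : Subgroup.zpowers g ⊔ frattini G = ⊤ := by
    rw [eq_top_iff, ← hsup]
    exact sup_le_sup_left (commutator_le_frattini hnil) _
  have htop : Subgroup.zpowers g = ⊤ := frattini_nongenerating hsup2
  exact ⟨⟨g, fun x => by have : x ∈ Subgroup.zpowers g := htop ▸ Subgroup.mem_top x; exact this⟩⟩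

lemma finset_lcm_eq_prod {ι : Type*} [DecidableEq ι] (s : Finset ι) (f : ι → ℕ)
    (h : ∀ i ∈ s, ∀ j ∈ s, i ≠ j → Nat.Coprime (f i) (f j)) :
    s.lcm f = ∏ i ∈ s, f i := by
  induction s using Finset.induction_on with
  | empty => simp
  | @insert a s ha ih =>
    have hcop : Nat.Coprime (f a) (∏ i ∈ s, f i) :=
      Nat.Coprime.prod_right fun i hi =>
        h a (Finset.mem_insert_self a s) i (Finset.mem_insert_of_mem hi)
          (fun hai => ha (hai ▸ hi))
    rw [Finset.lcm_insert, Finset.prod_insert ha,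
      ih (fun i hi j hj hij => h i (Finset.mem_insert_of_mem hi) j (Finset.mem_insert_of_mem hj) hij),
      lcm_eq_nat_lcm, Nat.Coprime.lcm_eq_mul hcop]

lemma exists_surjective_of_not_isCyclic (A : Type*) [CommGroup A] [Finite A]
    (h : ¬ IsCyclic A) :
    ∃ (p : ℕ), p.Prime ∧ ∃ f : A →* Multiplicative (ZMod p) × Multiplicative (ZMod p),
      Function.Surjective f := by
  classical
  obtain ⟨ι, hι, n, hn, ⟨e⟩⟩ := CommGroup.equiv_prod_multiplicative_zmod_of_finite A
  haveI := hι
  haveI : ∀ i, NeZero (n i) := fun i => ⟨by have := hn i; omega⟩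
  by_cases hP : ∃ p, p.Prime ∧ ∃ i j : ι, i ≠ j ∧ p ∣ n i ∧ p ∣ n j
  · obtain ⟨p, hp, i, j, hij, hpi, hpj⟩ := hP
    haveI : Fact p.Prime := ⟨hp⟩
    let f1 : (∀ k, Multiplicative (ZMod (n k))) →* Multiplicative (ZMod p) :=
      (AddMonoidHom.toMultiplicative (ZMod.castHom hpi (ZMod p)).toAddMonoidHom).comp
        (Pi.evalMonoidHom _ i)
    let f2 : (∀ k, Multiplicative (ZMod (n k))) →* Multiplicative (ZMod p) :=
      (AddMonoidHom.toMultiplicative (ZMod.castHom hpj (ZMod p)).toAddMonoidHom).comp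
        (Pi.evalMonoidHom _ j)
    refine ⟨p, hp, (f1.prod f2).comp e.toMonoidHom, ?_⟩
    have hsurj : Function.Surjective (f1.prod f2) := by
      rintro ⟨a, b⟩
      refine ⟨Pi.mulSingle i (Multiplicative.ofAdd ((Multiplicative.toAdd a).val : ZMod (n i))) *
        Pi.mulSingle j (Multiplicative.ofAdd ((Multiplicative.toAdd b).val : ZMod (n j))), ?_⟩
      have hvi : ∀ (x : ZMod p), (ZMod.castHom hpi (ZMod p)) ((x.val : ZMod (n i))) = x := by
        intro x
        rw [map_natCast]
        exact ZMod.natCast_rightInverse x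
      have hvj : ∀ (x : ZMod p), (ZMod.castHom hpj (ZMod p)) ((x.val : ZMod (n j))) = x := by
        intro x
        rw [map_natCast]
        exact ZMod.natCast_rightInverse x
      ext
      · simp [f1, Pi.mulSingle_eq_of_ne hij, hvi]
      · simp [f2, Pi.mulSingle_eq_of_ne hij.symm, hvj]
    exact hsurj.comp e.surjective
  · exfalso
    apply h
    push_neg at hP
    have hcop : ∀ i j : ι, i ≠ j → Nat.Coprime (n i) (n j) := by
      intro i j hij
      by_contra hc
      obtain ⟨p, hp, hpd⟩ := Nat.exists_prime_and_dvd hc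
      exact (hP p hp i j hij (dvd_trans hpd (Nat.gcd_dvd_left _ _)))
        (dvd_trans hpd (Nat.gcd_dvd_right _ _))
    haveI : IsCyclic (∀ k, Multiplicative (ZMod (n k))) := by
      apply IsCyclic.of_exponent_eq_card
      rw [Monoid.exponent_pi, Nat.card_pi]
      have h1 : ∀ k, Monoid.exponent (Multiplicative (ZMod (n k))) = n k := by
        intro k
        rw [Monoid.exponent_multiplicative, ZMod.exponent]
      have h2 : ∀ k, Nat.card (Multiplicative (ZMod (n k))) = n k := by
        intro k
        simp [Nat.card_zmod]
      simp only [h1, h2]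
      exact finset_lcm_eq_prod _ _ (fun i _ j _ hij => hcop i j hij)
    exact isCyclic_of_surjective e.symm e.symm.surjective

section Lines

variable {p : ℕ} [Fact p.Prime]

/-- The generators of the `p+1` "lines" in `ZMod p × ZMod p` (multiplicative version). -/
def lineGen (p : ℕ) : Option (ZMod p) → Multiplicative (ZMod p) × Multiplicative (ZMod p) :=
  fun c => match c with
  | none => (1, Multiplicative.ofAdd 1)
  | some a => (Multiplicative.ofAdd 1, Multiplicative.ofAdd a)

lemma lineGen_ne_one (c : Option (ZMod p)) : lineGen p c ≠ 1 := by
  have hp1 : (1 : ZMod p) ≠ 0 := by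
    have : Nontrivial (ZMod p) := ZMod.nontrivial p
    exact one_ne_zero
  cases c with
  | none =>
    intro h
    have h2 := congrArg (fun x => Multiplicative.toAdd x.2) h
    exact hp1 (by simpa [lineGen] using h2)
  | some a =>
    intro h
    have h2 := congrArg (fun x => Multiplicative.toAdd x.1) h
    exact hp1 (by simpa [lineGen] using h2)

lemma lineGen_pow_p (c : Option (ZMod p)) : (lineGen p c) ^ p = 1 := by
  have key : ∀ x : Multiplicative (ZMod p), x ^ p = 1 := by
    intro x
    have : (p : ℤ) • (Multiplicative.toAdd x) = 0 := by
      rw [zsmul_eq_mul]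
      push_cast
      simp [ZMod.natCast_self]
    have h2 := this
    rw [show ((p : ℤ) • (Multiplicative.toAdd x) = 0) ↔ (x ^ (p : ℤ) = 1) from Iff.rfl] at h2
    simpa using h2
  cases c <;> simp [lineGen, Prod.pow_def, key]

lemma orderOf_lineGen (c : Option (ZMod p)) : orderOf (lineGen p c) = p := by
  have hp := Fact.out (p := p.Prime)
  have hdvd : orderOf (lineGen p c) ∣ p := orderOf_dvd_of_pow_eq_one (lineGen_pow_p c)
  rcases (Nat.Prime.eq_one_or_self_of_dvd hp _ hdvd) with h | h
  · exact absurd (orderOf_eq_one_iff.mp h) (lineGen_ne_one c)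
  · exact h

lemma lineGen_zpowers_injective :
    Function.Injective (fun c => Subgroup.zpowers (lineGen p c)) := by
  intro c d hcd
  have hcd' : Subgroup.zpowers (lineGen p c) = Subgroup.zpowers (lineGen p d) := hcd
  have hmem : lineGen p c ∈ Subgroup.zpowers (lineGen p d) := by
    rw [← hcd']; exact Subgroup.mem_zpowers _
  obtain ⟨k, hk⟩ := hmem
  -- hk : (lineGen p d) ^ k = lineGen p c
  have hcomp : ∀ (u : ZMod p) (m : ℤ), (Multiplicative.ofAdd u) ^ m
      = Multiplicative.ofAdd ((m : ZMod p) * u) := by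
    intro u m
    rw [show ((Multiplicative.ofAdd u) ^ m = Multiplicative.ofAdd (m • u)) from rfl]
    rw [zsmul_eq_mul]
  cases c with
  | none =>
    cases d with
    | none => rfl
    | some b =>
      exfalso
      simp only [lineGen, Prod.pow_def, Prod.ext_iff] at hk
      obtain ⟨h1, h2⟩ := hk
      rw [hcomp] at h1
      have h1' : (k : ZMod p) * 1 = 0 := by
        have := congrArg Multiplicative.toAdd h1
        simpa using this
      rw [mul_one] at h1'
      rw [hcomp] at h2
      have h2' : (k : ZMod p) * b = 1 := by
        have := congrArg Multiplicative.toAdd h2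
        simpa using this
      rw [h1', zero_mul] at h2'
      exact zero_ne_one h2'
  | some a =>
    cases d with
    | none =>
      exfalso
      simp only [lineGen, Prod.pow_def, Prod.ext_iff] at hk
      obtain ⟨h1, _⟩ := hk
      have h1' : (0 : ZMod p) = 1 := by
        have := congrArg Multiplicative.toAdd h1
        simpa using this
      exact zero_ne_one h1'
    | some b =>
      simp only [lineGen, Prod.pow_def, Prod.ext_iff] at hk
      obtain ⟨h1, h2⟩ := hk
      rw [hcomp] at h1 h2
      have h1' : (k : ZMod p) * 1 = 1 := by
        have := congrArg Multiplicative.toAdd h1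
        simpa using this
      rw [mul_one] at h1'
      have h2' : (k : ZMod p) * b = a := by
        have := congrArg Multiplicative.toAdd h2
        simpa using this
      rw [h1', one_mul] at h2'
      rw [h2']

end Lines

lemma D_gt_of_not_isCyclic {G : Type*} [Group G] [Finite G]
    (hnil : Group.IsNilpotent G) (hnc : ¬ IsCyclic G) :
    2 * Nat.card G + 1 < D G := by
  classical
  set n := Nat.card G with hn
  -- The abelianization is not cyclic
  have hA : ¬ IsCyclic (Abelianization G) := fun h =>
    hnc (isCyclic_of_abelianization_isCyclic hnil h)
  obtain ⟨p, hp, f0, hf0⟩ := exists_surjective_of_not_isCyclic (Abelianization G) hA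
  haveI : Fact p.Prime := ⟨hp⟩
  set ψ : G →* Multiplicative (ZMod p) × Multiplicative (ZMod p) :=
    f0.comp Abelianization.of with hψdef
  have hψ : Function.Surjective ψ :=
    hf0.comp (fun y => Quotient.inductionOn y fun g => ⟨g, rfl⟩)
  set V := Multiplicative (ZMod p) × Multiplicative (ZMod p)
  have hcardV : Nat.card V = p ^ 2 := by
    simp [V, Nat.card_prod, Nat.card_zmod, sq]
  have hp2n : p ^ 2 ∣ n := by
    rw [← hcardV, hn]
    exact Subgroup.card_dvd_of_surjective ψ hψ
  have hppos : 0 < p := hp.pos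
  have hnpos : 0 < n := Nat.card_pos
  have hpn : p ∣ n := dvd_trans (dvd_pow_self p two_ne_zero) hp2n
  have hple : p ≤ n / p := by
    rw [Nat.le_div_iff_mul_le hppos]
    rw [← sq]
    exact Nat.le_of_dvd hnpos hp2n
  -- the p+1 pulled-back subgroups
  set Z : Option (ZMod p) → Subgroup V := fun c => Subgroup.zpowers (lineGen p c) with hZ
  have hcardZ : ∀ c, Nat.card (Z c) = p := fun c => by
    rw [hZ, Nat.card_zpowers, orderOf_lineGen]
  have hindexZ : ∀ c, (Z c).index = p := by
    intro c
    have := Subgroup.index_mul_card (Z c)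
    rw [hcardZ c, hcardV] at this
    have hpne : p ≠ 0 := hppos.ne'
    rw [sq] at this
    exact Nat.eq_of_mul_eq_mul_right hppos this
  set K : Option (ZMod p) → Subgroup G := fun c => Subgroup.comap ψ (Z c) with hK
  have hKinj : Function.Injective K := by
    intro c d h
    exact lineGen_zpowers_injective (Subgroup.comap_injective hψ h)
  have hKindex : ∀ c, (K c).index = p := fun c => by
    rw [hK]
    rw [Subgroup.index_comap_of_surjective _ hψ]
    exact hindexZ c
  have hKcard : ∀ c, Nat.card (K c) = n / p := by
    intro c
    have h2 := Subgroup.index_mul_card (K c)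
    rw [hKindex c, ← hn] at h2
    rw [← h2, Nat.mul_div_cancel_left _ hppos]
  have hKnormal : ∀ c, (K c).Normal := fun c =>
    Subgroup.Normal.comap (Subgroup.normal_of_comm (Z c)) ψ
  -- assemble the finset
  set NF := (Set.toFinite {N : Subgroup G | N.Normal}).toFinset with hNF
  set T : Finset (Subgroup G) :=
    insert ⊥ (insert ⊤ (Finset.image K Finset.univ)) with hT
  have hTsub : T ⊆ NF := by
    intro N hN
    rw [hNF, Set.Finite.mem_toFinset]
    rw [hT] at hN
    simp only [Finset.mem_insert, Finset.mem_image] at hN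
    rcases hN with rfl | rfl | ⟨c, _, rfl⟩
    · exact (inferInstance : (⊥ : Subgroup G).Normal)
    · exact (inferInstance : (⊤ : Subgroup G).Normal)
    · exact hKnormal c
  have hnp1 : 1 < n / p := lt_of_lt_of_le hp.one_lt hple
  have hnplt : n / p < n := Nat.div_lt_self hnpos hp.one_lt
  have hbotT : ⊥ ∉ insert ⊤ (Finset.image K Finset.univ) := by
    simp only [Finset.mem_insert, Finset.mem_image, not_or, not_exists]
    constructor
    · intro h
      have := congrArg (fun (S : Subgroup G) => Nat.card S) h
      simp only [Subgroup.card_bot, Subgroup.card_top] at this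
      omega
    · intro c hc
      obtain ⟨-, h⟩ := hc
      have := congrArg (fun (S : Subgroup G) => Nat.card S) h
      simp only [hKcard c, Subgroup.card_bot] at this
      omega
  have htopim : ⊤ ∉ Finset.image K Finset.univ := by
    simp only [Finset.mem_image, not_exists]
    intro c hc
    obtain ⟨-, h⟩ := hc
    have := congrArg (fun (S : Subgroup G) => Nat.card S) h
    simp only [hKcard c, Subgroup.card_top, ← hn] at this
    omega
  have hsumT : ∑ N ∈ T, Nat.card N = 1 + n + (p + 1) * (n / p) := by
    rw [hT, Finset.sum_insert hbotT, Finset.sum_insert htopim,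
      Finset.sum_image (fun c _ d _ h => hKinj h)]
    have : ∑ c : Option (ZMod p), Nat.card (K c) = (p + 1) * (n / p) := by
      rw [Finset.sum_congr rfl (fun c _ => hKcard c)]
      rw [Finset.sum_const, Finset.card_univ, Fintype.card_option, ZMod.card]
      ring
    rw [this, Subgroup.card_bot, Subgroup.card_top, ← hn]
    ring
  have hDge : ∑ N ∈ T, Nat.card N ≤ D G := by
    rw [D_eq_sum_finset, ← hNF]
    exact Finset.sum_le_sum_of_subset hTsub
  have harith : 2 * n + 1 < 1 + n + (p + 1) * (n / p) := by
    have hnp : p * (n / p) = n := Nat.mul_div_cancel' hpn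
    have : (p + 1) * (n / p) = n + n / p := by
      rw [add_mul, one_mul, hnp]
    omega
  omega

theorem nilpotent_quasiLeinster_iff (G : Type*) [Group G] [Finite G]
    (hnil : Group.IsNilpotent G) :
    D G = 2 * Nat.card G + 1 ↔
      IsCyclic G ∧ ArithmeticFunction.sigma 1 (Nat.card G) = 2 * Nat.card G + 1 := by
  constructor
  · intro hD
    have hcyc : IsCyclic G := by
      by_contra hnc
      have := D_gt_of_not_isCyclic hnil hnc
      omega
    haveI := hcyc
    refine ⟨hcyc, ?_⟩
    rw [ArithmeticFunction.sigma_one_apply, ← D_eq_sigma_of_cyclic, hD]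
  · rintro ⟨hcyc, hσ⟩
    haveI := hcyc
    rw [D_eq_sigma_of_cyclic, ← ArithmeticFunction.sigma_one_apply, hσ]
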